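/- Let F be a finite field with −1 not a square, and let 𝒫 ⊆ F^3 be the paraboloid over F^2. For all subsets A, B ⊆ 𝒫 and every b ∈ 𝒫, the number of triples (a, d, c) ∈ A × B × 𝒫 with a − d = c − b is at most |A| + min(|A|^{1/2}|B| + |A|, |A||B|^{1/2} + |B|). -/

import Mathlib

open Finset

def paraboloid3 (F : Type) [Field F] : Set ((F × F) × F) :=
  {p | p.2 = p.1.1 ^ 2 + p.1.2 ^ 2}

def qform {F : Type} [Field F] (v : F × F) : F := v.1 ^ 2 + v.2 ^ 2

lemma mem_par {F : Type} [Field F] (p : (F × F) × F) :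
    p ∈ paraboloid3 F ↔ p.2 = qform p.1 := Iff.rfl

lemma cond_iff {F : Type} [Field F] (h2 : (2:F) ≠ 0) (α δ β : F × F) :
    ((α.1 - δ.1 + β.1)^2 + (α.2 - δ.2 + β.2)^2
        = (α.1^2 + α.2^2) - (δ.1^2 + δ.2^2) + (β.1^2 + β.2^2))
      ↔ (α.1-δ.1)*(β.1-δ.1) + (α.2-δ.2)*(β.2-δ.2) = 0 := by
  constructor
  · intro h
    have h0 : (2:F) * ((α.1-δ.1)*(β.1-δ.1) + (α.2-δ.2)*(β.2-δ.2)) = 0 := by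
      linear_combination h
    exact (mul_eq_zero.mp h0).resolve_left h2
  · intro h; linear_combination (2:F) * h


lemma real_ineq (x a b : ℝ) (hx : 0 ≤ x) (ha : 0 ≤ a) (hb : 0 ≤ b)
    (h : x^2 ≤ a * b^2 + a * x) : x ≤ a^((1:ℝ)/2) * b + a := by
  rw [← Real.sqrt_eq_rpow]
  have hs0 : 0 ≤ Real.sqrt a := Real.sqrt_nonneg a
  have hs2 : Real.sqrt a ^ 2 = a := Real.sq_sqrt ha
  set s := Real.sqrt a with hs
  rw [← hs2] at h ⊢
  nlinarith [mul_nonneg hs0 hb, sq_nonneg s, mul_nonneg (sq_nonneg s) (mul_nonneg hs0 hb)]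

lemma incidence_bound {α β : Type*} [DecidableEq α] [DecidableEq β]
    (P : Finset α) (L : Finset β) (r : α → β → Prop) [∀ a b, Decidable (r a b)]
    (h : ∀ l ∈ L, ∀ l' ∈ L, l ≠ l' →
      (P.filter fun p => r p l ∧ r p l').card ≤ 1) :
    (((P ×ˢ L).filter fun q => r q.1 q.2).card : ℝ)
      ≤ (P.card : ℝ) ^ ((1:ℝ)/2) * L.card + P.card := by
  classical
  set t : α → ℕ := fun p => (L.filter fun l => r p l).card with ht
  have htp : ∀ p, t p = ∑ l ∈ L, if r p l then 1 else 0 := fun p => Finset.card_filter _ _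
  have hI : ((P ×ˢ L).filter fun q => r q.1 q.2).card = ∑ p ∈ P, t p := by
    rw [Finset.card_filter, Finset.sum_product]
    exact Finset.sum_congr rfl fun p _ => (htp p).symm
  have hI' : ∑ p ∈ P, t p = ∑ l ∈ L, (P.filter fun p => r p l).card := by
    calc ∑ p ∈ P, t p = ∑ p ∈ P, ∑ l ∈ L, if r p l then 1 else 0 :=
          Finset.sum_congr rfl fun p _ => htp p
      _ = ∑ l ∈ L, ∑ p ∈ P, if r p l then 1 else 0 := Finset.sum_comm
      _ = _ := Finset.sum_congr rfl fun l _ => (Finset.card_filter _ _).symm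
  have hsq : ∀ p, (t p)^2 = ∑ l ∈ L, ∑ l' ∈ L, if r p l ∧ r p l' then 1 else 0 := by
    intro p
    have hpt : ∀ l l', (if r p l ∧ r p l' then (1:ℕ) else 0)
        = (if r p l then 1 else 0) * (if r p l' then 1 else 0) := by
      intro l l'; by_cases h1 : r p l <;> by_cases h2 : r p l' <;> simp [h1, h2]
    rw [sq, htp p, Finset.sum_mul_sum]
    exact (Finset.sum_congr rfl fun l _ => Finset.sum_congr rfl fun l' _ => hpt l l').symm
  have hN2 : ∑ p ∈ P, (t p)^2 ≤ (∑ p ∈ P, t p) + L.card * L.card := by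
    have e1 : ∑ p ∈ P, (t p)^2
        = ∑ q ∈ L ×ˢ L, (P.filter fun p => r p q.1 ∧ r p q.2).card := by
      calc ∑ p ∈ P, (t p)^2
          = ∑ p ∈ P, ∑ q ∈ L ×ˢ L, (if r p q.1 ∧ r p q.2 then 1 else 0) := by
            refine Finset.sum_congr rfl fun p _ => ?_
            rw [hsq, Finset.sum_product]
        _ = ∑ q ∈ L ×ˢ L, ∑ p ∈ P, (if r p q.1 ∧ r p q.2 then 1 else 0) :=
            Finset.sum_comm
        _ = _ := Finset.sum_congr rfl fun q _ => (Finset.card_filter _ _).symm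
    rw [e1, ← Finset.sum_filter_add_sum_filter_not (L ×ˢ L) (fun q => q.1 = q.2)]
    have hdiag : ∑ q ∈ (L ×ˢ L).filter (fun q => q.1 = q.2),
        (P.filter fun p => r p q.1 ∧ r p q.2).card ≤ ∑ p ∈ P, t p := by
      have himg : (L ×ˢ L).filter (fun q => q.1 = q.2) = L.image (fun l => (l,l)) := by
        ext ⟨x, y⟩
        simp only [Finset.mem_filter, Finset.mem_product, Finset.mem_image, Prod.mk.injEq]
        constructor
        · rintro ⟨⟨h1, _⟩, h3⟩; exact ⟨x, h1, rfl, h3⟩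
        · rintro ⟨l, hl, rfl, rfl⟩; exact ⟨⟨hl, hl⟩, rfl⟩
      rw [himg, Finset.sum_image (by intros a _ b _ hab; exact ((Prod.mk.injEq _ _ _ _).mp hab).1)]
      rw [hI']
      refine Finset.sum_le_sum fun l _ => Finset.card_le_card ?_
      intro p hp; rw [Finset.mem_filter] at hp ⊢; exact ⟨hp.1, hp.2.1⟩
    have hoff : ∑ q ∈ (L ×ˢ L).filter (fun q => ¬ q.1 = q.2),
        (P.filter fun p => r p q.1 ∧ r p q.2).card ≤ L.card * L.card := by
      calc ∑ q ∈ (L ×ˢ L).filter (fun q => ¬ q.1 = q.2),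
            (P.filter fun p => r p q.1 ∧ r p q.2).card
          ≤ ∑ _q ∈ (L ×ˢ L).filter (fun q => ¬ q.1 = q.2), 1 := by
            refine Finset.sum_le_sum fun q hq => ?_
            rw [Finset.mem_filter, Finset.mem_product] at hq
            exact h q.1 hq.1.1 q.2 hq.1.2 hq.2
        _ ≤ (L ×ˢ L).card := by
            rw [Finset.sum_const, smul_eq_mul, mul_one]
            exact Finset.card_filter_le _ _
        _ = L.card * L.card := Finset.card_product L L
    omega
  set I : ℝ := (((P ×ˢ L).filter fun q => r q.1 q.2).card : ℝ) with hIdef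
  have hIsum : I = ∑ p ∈ P, (t p : ℝ) := by rw [hIdef, hI]; push_cast; ring
  have hcs : I^2 ≤ (P.card : ℝ) * ∑ p ∈ P, (t p : ℝ)^2 := by
    have hc := Finset.sum_mul_sq_le_sq_mul_sq P (fun _ => (1:ℝ)) (fun p => (t p : ℝ))
    simp only [one_pow, one_mul, Finset.sum_const, nsmul_eq_mul, mul_one] at hc
    rw [hIsum]; exact hc
  have h2 : (∑ p ∈ P, (t p:ℝ)^2) ≤ (∑ p ∈ P, (t p:ℝ)) + (L.card:ℝ) * L.card := by
    exact_mod_cast hN2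
  have hfin : I^2 ≤ (P.card : ℝ) * (L.card : ℝ)^2 + (P.card : ℝ) * I := by
    rw [hIsum] at *
    nlinarith [hcs, h2, (by positivity : (0:ℝ) ≤ (P.card:ℝ))]
  exact real_ineq I _ _ (by positivity) (by positivity) (by positivity) hfin


lemma aniso {F : Type} [Field F] (hsq : ¬ ∃ x : F, x ^ 2 = -1)
    {x y : F} (h : x^2 + y^2 = 0) : x = 0 ∧ y = 0 := by
  by_cases hy : y = 0
  · subst hy
    have hx : x ^ 2 = 0 := by linear_combination h
    exact ⟨pow_eq_zero_iff (n := 2) (by norm_num) |>.mp hx, rfl⟩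
  · exact absurd ⟨x / y, by field_simp; linear_combination h⟩ hsq

lemma key {F : Type} [Field F] (hsq : ¬ ∃ x : F, x ^ 2 = -1)
    (a1 a2 c1 c2 d1 d2 f1 f2 e1 e2 : F)
    (hne : ¬(a1 = c1 ∧ a2 = c2))
    (hd : ¬(d1 = e1 ∧ d2 = e2))
    (hd' : ¬(f1 = e1 ∧ f2 = e2))
    (h1 : (a1-d1)*(e1-d1) + (a2-d2)*(e2-d2) = 0)
    (h2 : (c1-d1)*(e1-d1) + (c2-d2)*(e2-d2) = 0)
    (h3 : (a1-f1)*(e1-f1) + (a2-f2)*(e2-f2) = 0)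
    (h4 : (c1-f1)*(e1-f1) + (c2-f2)*(e2-f2) = 0) :
    d1 = f1 ∧ d2 = f2 := by
  have hvn : (a1-c1)*(e1-d1) + (a2-c2)*(e2-d2) = 0 := by linear_combination h1 - h2
  have hvm : (a1-c1)*(e1-f1) + (a2-c2)*(e2-f2) = 0 := by linear_combination h3 - h4
  have hD : (e1-d1)*(e2-f2) - (e2-d2)*(e1-f1) = 0 := by
    rcases not_and_or.mp hne with hv1 | hv2
    · have hv1' : a1 - c1 ≠ 0 := sub_ne_zero.mpr hv1
      have h0 : (a1-c1) * ((e1-d1)*(e2-f2) - (e2-d2)*(e1-f1)) = 0 := by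
        linear_combination (e2-f2)*hvn - (e2-d2)*hvm
      exact (mul_eq_zero.mp h0).resolve_left hv1'
    · have hv2' : a2 - c2 ≠ 0 := sub_ne_zero.mpr hv2
      have h0 : (a2-c2) * ((e1-d1)*(e2-f2) - (e2-d2)*(e1-f1)) = 0 := by
        linear_combination (e1-d1)*hvm - (e1-f1)*hvn
      exact (mul_eq_zero.mp h0).resolve_left hv2'
  have hw : (a1-f1)*(e1-d1) + (a2-f2)*(e2-d2) = 0 := by
    rcases not_and_or.mp hd' with hm1 | hm2
    · have hm1' : e1 - f1 ≠ 0 := sub_ne_zero.mpr (fun h => hm1 h.symm)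
      have h0 : (e1-f1) * ((a1-f1)*(e1-d1) + (a2-f2)*(e2-d2)) = 0 := by
        linear_combination (e1-d1)*h3 - (a2-f2)*hD
      exact (mul_eq_zero.mp h0).resolve_left hm1'
    · have hm2' : e2 - f2 ≠ 0 := sub_ne_zero.mpr (fun h => hm2 h.symm)
      have h0 : (e2-f2) * ((a1-f1)*(e1-d1) + (a2-f2)*(e2-d2)) = 0 := by
        linear_combination (e2-d2)*h3 + (a1-f1)*hD
      exact (mul_eq_zero.mp h0).resolve_left hm2'
  have hu : (f1-d1)*(e1-d1) + (f2-d2)*(e2-d2) = 0 := by linear_combination h1 - hw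
  have hnn : (e1-d1)^2 + (e2-d2)^2 ≠ 0 := by
    intro h
    obtain ⟨z1, z2⟩ := aniso hsq h
    exact hd ⟨(sub_eq_zero.mp z1).symm, (sub_eq_zero.mp z2).symm⟩
  have e1eq : (f1-d1) * ((e1-d1)^2 + (e2-d2)^2) = 0 := by
    linear_combination (e1-d1)*hu + (e2-d2)*hD
  have e2eq : (f2-d2) * ((e1-d1)^2 + (e2-d2)^2) = 0 := by
    linear_combination (e2-d2)*hu - (e1-d1)*hD
  constructor
  · exact (sub_eq_zero.mp ((mul_eq_zero.mp e1eq).resolve_right hnn)).symm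
  · exact (sub_eq_zero.mp ((mul_eq_zero.mp e2eq).resolve_right hnn)).symm

theorem triple_count_bound (F : Type) [Field F] [Fintype F]
    (hchar : ringChar F ≠ 2) (hsq : ¬ ∃ x : F, x ^ 2 = -1)
    (A B : Set ((F × F) × F))
    (hA : A ⊆ paraboloid3 F) (hB : B ⊆ paraboloid3 F)
    (b : (F × F) × F) (hb : b ∈ paraboloid3 F) :
    (({q : ((F × F) × F) × ((F × F) × F) × ((F × F) × F) |
        q.1 ∈ A ∧ q.2.1 ∈ B ∧ q.2.2 ∈ paraboloid3 F ∧
          q.1 - q.2.1 = q.2.2 - b}).ncard : ℝ) ≤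
      (A.ncard : ℝ) +
        min ((A.ncard : ℝ) ^ ((1 : ℝ) / 2) * (B.ncard : ℝ) + (A.ncard : ℝ))
          ((A.ncard : ℝ) * (B.ncard : ℝ) ^ ((1 : ℝ) / 2) + (B.ncard : ℝ)) := by
  classical
  have h2 : (2:F) ≠ 0 := Ring.two_ne_zero hchar
  set cond : (F × F) → (F × F) → Prop := fun α δ =>
    (α.1-δ.1)*(b.1.1-δ.1) + (α.2-δ.2)*(b.1.2-δ.2) = 0 with hcond
  set T3 : Set (((F × F) × F) × ((F × F) × F) × ((F × F) × F)) :=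
    {q | q.1 ∈ A ∧ q.2.1 ∈ B ∧ q.2.2 ∈ paraboloid3 F ∧ q.1 - q.2.1 = q.2.2 - b} with hT3
  set S2 : Set ((F × F) × (F × F)) :=
    {q | (q.1, qform q.1) ∈ A ∧ (q.2, qform q.2) ∈ B ∧ cond q.1 q.2} with hS2
  -- step 1 : T3.ncard = S2.ncard
  set g : (((F × F) × F) × ((F × F) × F) × ((F × F) × F)) → (F × F) × (F × F) :=
    fun q => (q.1.1, q.2.1.1) with hg
  have himg : g '' T3 = S2 := by
    apply Set.ext
    rintro ⟨α, δ⟩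
    constructor
    · rintro ⟨⟨a, d, c⟩, ⟨haA, hdB, hcP, heq⟩, hgq⟩
      simp only [hg, Prod.mk.injEq] at hgq
      obtain ⟨rfl, rfl⟩ := hgq
      have ha2 : a.2 = qform a.1 := hA haA
      have hd2 : d.2 = qform d.1 := hB hdB
      have haq : (a.1, qform a.1) = a := by rw [← ha2]
      have hdq : (d.1, qform d.1) = d := by rw [← hd2]
      refine ⟨by rwa [haq], by rwa [hdq], ?_⟩
      have hc : c = a - d + b := sub_eq_iff_eq_add.mp heq.symm
      rw [hc] at hcP
      rw [mem_par] at hcP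
      simp only [Prod.fst_sub, Prod.fst_add, Prod.snd_sub, Prod.snd_add, qform] at hcP
      rw [ha2, hd2, (mem_par b).mp hb] at hcP
      simp only [qform] at hcP
      exact (cond_iff h2 a.1 d.1 b.1).mp hcP.symm
    · rintro ⟨hq1, hq2, hc⟩
      refine ⟨((α, qform α), (δ, qform δ), (α, qform α) - (δ, qform δ) + b),
        ⟨hq1, hq2, ?_, (add_sub_cancel_right _ _).symm⟩, rfl⟩
      rw [mem_par]
      simp only [Prod.fst_sub, Prod.fst_add, Prod.snd_sub, Prod.snd_add, qform]
      rw [(mem_par b).mp hb]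
      simp only [qform]
      exact ((cond_iff h2 α δ b.1).mpr hc).symm
  have hinj : Set.InjOn g T3 := by
    rintro q hq q' hq' hgq
    simp only [hg, Prod.mk.injEq] at hgq
    obtain ⟨e1, e2⟩ := hgq
    have k1 : q.1 = q'.1 := Prod.ext e1 (by rw [hA hq.1, hA hq'.1, e1])
    have k2 : q.2.1 = q'.2.1 := Prod.ext e2 (by rw [hB hq.2.1, hB hq'.2.1, e2])
    have k3 : q.2.2 = q'.2.2 := by
      have u1 : q.2.2 = q.1 - q.2.1 + b := by
        have := hq.2.2.2
        exact sub_eq_iff_eq_add.mp this.symm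
      have u2 : q'.2.2 = q'.1 - q'.2.1 + b := by
        have := hq'.2.2.2
        exact sub_eq_iff_eq_add.mp this.symm
      rw [u1, u2, k1, k2]
    exact Prod.ext k1 (Prod.ext k2 k3)
  have step1 : T3.ncard = S2.ncard := by
    rw [← himg, Set.ncard_image_of_injOn hinj]
  -- split
  set S2a : Set ((F × F) × (F × F)) := {q ∈ S2 | q.2 = b.1} with hS2a
  set S2b : Set ((F × F) × (F × F)) := {q ∈ S2 | q.2 ≠ b.1} with hS2b
  have hsplit : S2.ncard ≤ S2a.ncard + S2b.ncard := by
    have : S2 = S2a ∪ S2b := by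
      ext q; simp only [hS2a, hS2b, Set.mem_union, Set.mem_setOf_eq]; tauto
    rw [this]; exact Set.ncard_union_le _ _
  have hS2aA : S2a.ncard ≤ A.ncard := by
    apply Set.ncard_le_ncard_of_injOn (fun q => (q.1, qform q.1))
    · rintro q hq; exact hq.1.1
    · rintro q hq q' hq' h
      simp only [Prod.mk.injEq] at h
      exact Prod.ext h.1 (hq.2.trans hq'.2.symm)
  -- finset conversion
  set P₀ : Finset (F × F) := univ.filter (fun α => (α, qform α) ∈ A) with hP₀
  set L₀ : Finset (F × F) := univ.filter (fun δ => (δ, qform δ) ∈ B ∧ δ ≠ b.1) with hL₀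
  have hS2bI : S2b.ncard = ((P₀ ×ˢ L₀).filter fun q => cond q.1 q.2).card := by
    have hset : S2b = (((P₀ ×ˢ L₀).filter fun q => cond q.1 q.2) : Finset ((F × F) × (F × F))) := by
      ext q
      simp only [hS2b, hS2, Set.mem_setOf_eq, Finset.coe_filter, Finset.mem_product,
        hP₀, hL₀, Finset.mem_filter, Finset.mem_univ, true_and]
      tauto
    rw [hset, Set.ncard_coe_finset]
  have hPA : P₀.card ≤ A.ncard := by
    rw [Set.ncard_eq_toFinset_card' A]
    apply Finset.card_le_card_of_injOn (fun α => (α, qform α))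
    · intro α hα
      rw [Finset.mem_coe, Set.mem_toFinset]
      simp only [hP₀, Finset.mem_coe, Finset.mem_filter] at hα
      exact hα.2
    · intro α _ α' _ h
      simp only [Prod.mk.injEq] at h
      exact h.1
  have hLB : L₀.card ≤ B.ncard := by
    rw [Set.ncard_eq_toFinset_card' B]
    apply Finset.card_le_card_of_injOn (fun δ => (δ, qform δ))
    · intro δ hδ
      rw [Finset.mem_coe, Set.mem_toFinset]
      simp only [hL₀, Finset.mem_coe, Finset.mem_filter] at hδ
      exact hδ.2.1
    · intro δ _ δ' _ h
      simp only [Prod.mk.injEq] at h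
      exact h.1
  -- incidences
  have hkey : ∀ α α' δ δ' : (F × F), α ≠ α' → δ ≠ b.1 → δ' ≠ b.1 →
      cond α δ → cond α' δ → cond α δ' → cond α' δ' → δ = δ' := by
    intro α α' δ δ' hne hd hd' c1 c2 c3 c4
    have := key hsq α.1 α.2 α'.1 α'.2 δ.1 δ.2 δ'.1 δ'.2 b.1.1 b.1.2
      (fun h => hne (Prod.ext h.1 h.2)) (fun h => hd (Prod.ext h.1 h.2))
      (fun h => hd' (Prod.ext h.1 h.2)) c1 c2 c3 c4
    exact Prod.ext this.1 this.2
  have hb1 : (((P₀ ×ˢ L₀).filter fun q => cond q.1 q.2).card : ℝ)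
      ≤ (P₀.card : ℝ) ^ ((1:ℝ)/2) * L₀.card + P₀.card := by
    refine incidence_bound P₀ L₀ cond ?_
    intro l hl l' hl' hll
    rw [Finset.card_le_one]
    intro p hp p' hp'
    simp only [hL₀, Finset.mem_filter] at hl hl'
    simp only [Finset.mem_filter] at hp hp'
    by_contra hpp
    exact hll (hkey p p' l l' hpp hl.2.2 hl'.2.2 hp.2.1 hp'.2.1 hp.2.2 hp'.2.2)
  have hswap : ((L₀ ×ˢ P₀).filter fun q => cond q.2 q.1).card
      = ((P₀ ×ˢ L₀).filter fun q => cond q.1 q.2).card := by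
    apply Finset.card_bij (fun q _ => q.swap)
    · intro q hq
      simp only [Finset.mem_filter, Finset.mem_product] at hq ⊢
      exact ⟨⟨hq.1.2, hq.1.1⟩, hq.2⟩
    · intro q hq q' hq' h
      exact Prod.swap_injective h
    · intro q hq
      refine ⟨q.swap, ?_, (Prod.swap_swap q).symm⟩
      simp only [Finset.mem_filter, Finset.mem_product] at hq ⊢
      exact ⟨⟨hq.1.2, hq.1.1⟩, hq.2⟩
  have hb2 : (((P₀ ×ˢ L₀).filter fun q => cond q.1 q.2).card : ℝ)
      ≤ (L₀.card : ℝ) ^ ((1:ℝ)/2) * P₀.card + L₀.card := by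
    rw [← hswap]
    refine incidence_bound L₀ P₀ (fun δ α => cond α δ) ?_
    intro l hl l' hl' hll
    rw [Finset.card_le_one]
    intro p hp p' hp'
    simp only [hL₀, Finset.mem_filter] at hp hp'
    by_contra hpp
    exact hpp (hkey l l' p p' hll hp.1.2.2 hp'.1.2.2 hp.2.1 hp.2.2 hp'.2.1 hp'.2.2)
  
  -- final assembly
  have hnat : T3.ncard ≤ A.ncard + ((P₀ ×ˢ L₀).filter fun q => cond q.1 q.2).card := by
    rw [step1]
    calc S2.ncard ≤ S2a.ncard + S2b.ncard := hsplit
      _ ≤ A.ncard + ((P₀ ×ˢ L₀).filter fun q => cond q.1 q.2).card :=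
        add_le_add hS2aA (le_of_eq hS2bI)
  have hcA : (P₀.card : ℝ) ≤ (A.ncard : ℝ) := by exact_mod_cast hPA
  have hcB : (L₀.card : ℝ) ≤ (B.ncard : ℝ) := by exact_mod_cast hLB
  have hrA : (P₀.card : ℝ) ^ ((1:ℝ)/2) ≤ (A.ncard : ℝ) ^ ((1:ℝ)/2) :=
    Real.rpow_le_rpow (Nat.cast_nonneg _) hcA (by norm_num)
  have hrB : (L₀.card : ℝ) ^ ((1:ℝ)/2) ≤ (B.ncard : ℝ) ^ ((1:ℝ)/2) :=
    Real.rpow_le_rpow (Nat.cast_nonneg _) hcB (by norm_num)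
  have hI1 : ((((P₀ ×ˢ L₀).filter fun q => cond q.1 q.2).card : ℕ) : ℝ)
      ≤ (A.ncard : ℝ) ^ ((1:ℝ)/2) * (B.ncard : ℝ) + (A.ncard : ℝ) :=
    le_trans hb1 (add_le_add
      (mul_le_mul hrA hcB (Nat.cast_nonneg _)
        (Real.rpow_nonneg (Nat.cast_nonneg _) _)) hcA)
  have hI2 : ((((P₀ ×ˢ L₀).filter fun q => cond q.1 q.2).card : ℕ) : ℝ)
      ≤ (A.ncard : ℝ) * (B.ncard : ℝ) ^ ((1:ℝ)/2) + (B.ncard : ℝ) := by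
    refine le_trans hb2 (le_trans (add_le_add
      (mul_le_mul hrB hcA (Nat.cast_nonneg _)
        (Real.rpow_nonneg (Nat.cast_nonneg _) _)) hcB) ?_)
    rw [mul_comm]
  calc (T3.ncard : ℝ)
      ≤ (A.ncard : ℝ) + ((((P₀ ×ˢ L₀).filter fun q => cond q.1 q.2).card : ℕ) : ℝ) := by
        exact_mod_cast hnat
    _ ≤ (A.ncard : ℝ) + min ((A.ncard : ℝ) ^ ((1:ℝ)/2) * (B.ncard : ℝ) + (A.ncard : ℝ))
          ((A.ncard : ℝ) * (B.ncard : ℝ) ^ ((1:ℝ)/2) + (B.ncard : ℝ)) :=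
        add_le_add (le_refl _) (le_min hI1 hI2)
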